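/- Under Assumption 1, suppose μ* ∈ (0,1) satisfies g(0, μ*) = 0. Then for every ε > 0 there exists δ > 0 such that for every μ ∈ (μ* − δ, μ*) ∩ [0,1), every z ∈ [0,1] with g(z, μ) = 0 satisfies 0 < z < ε. In particular, the interior equilibrium strategy z^†(μ) converges to 0 as μ approaches μ* from below, so the endemic infection level y_EE(1, z^†(μ), μ) converges to y_EE(1, 0, μ*). -/

import Mathlib

/-- Effective infection rate β_eff(z_S, z_I, μ_S). -/
noncomputable def betaEff (a bP bU zS zI m : ℝ) : ℝ :=
  (bP + (bU - bP) * zI) * (a + (1 - a) * (zS * m + zI * (1 - m)))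

/-- Endemic infection level y_EE(z_S, z_I, μ_S). -/
noncomputable def yEE (a gam bP bU zS zI m : ℝ) : ℝ :=
  1 - gam / betaEff a bP bU zS zI m

/-- The function h(z_I, μ_S). -/
noncomputable def hFun (a gam bP bU L CP zI m : ℝ) : ℝ :=
  (1 - a) * L * (bP + (bU - bP) * zI) * yEE a gam bP bU 1 zI m - CP

/-- The function g(z_I, μ_S). -/
noncomputable def gFun (a gam bP bU L CP CU zI m : ℝ) : ℝ :=
  yEE a gam bP bU 1 zI m * (CU - CP)
    - (1 - m) * (1 - yEE a gam bP bU 1 zI m) * (-(hFun a gam bP bU L CP zI m))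

/-- Expected-utility difference ΔU[S̄]. -/
noncomputable def dUS (a bP bU L CP y zI : ℝ) : ℝ :=
  (1 - a) * L * (bP + (bU - bP) * zI) * y - CP

/-- Expected-utility difference ΔU[Ī]. -/
noncomputable def dUI (a bP bU L CP CU m y zI : ℝ) : ℝ :=
  ((1 - m) * (1 - y) / (y + (1 - m) * (1 - y))) *
    ((1 - a) * L * (bP + (bU - bP) * zI) * y - CU) + CU - CP

/-- Stationary Nash equilibrium for signal μ_S = m. -/
def IsSNE (a gam bP bU L CP CU m y zS zI : ℝ) : Prop :=
  y ∈ Set.Ioo (0:ℝ) 1 ∧ zS ∈ Set.Icc (0:ℝ) 1 ∧ zI ∈ Set.Icc (0:ℝ) 1 ∧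
  gam < betaEff a bP bU zS zI m ∧
  y = yEE a gam bP bU zS zI m ∧
  (0 < dUS a bP bU L CP y zI → zS = 0) ∧
  (dUS a bP bU L CP y zI < 0 → zS = 1) ∧
  (0 < dUI a bP bU L CP CU m y zI → zI = 0) ∧
  (dUI a bP bU L CP CU m y zI < 0 → zI = 1)

/-- Characterization of μ_S^max. -/
def IsMuMax (a gam bP bU L CP CU mmax : ℝ) : Prop :=
  (0 ≤ gFun a gam bP bU L CP CU 0 0 ∧ mmax = 0) ∨
  (gFun a gam bP bU L CP CU 0 0 < 0 ∧ mmax ∈ Set.Ioo (0:ℝ) 1 ∧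
    gFun a gam bP bU L CP CU 0 mmax = 0)

/-- The threshold μ_S^min. -/
noncomputable def muMin (a gam bU L CP CU : ℝ) : ℝ :=
  1 - (bU - gam) * (CU - CP) / (gam * (CP - (1 - a) * L * (bU - gam)))

/-- Polynomial form of g: Pq(z,m) = B·A²·g(z,m). -/
noncomputable def Pq (a gam bP bU L CP CU z m : ℝ) : ℝ :=
  ((bP + (bU - bP) * z) * (a + (1 - a) * (m + z * (1 - m))) - gam) *
      ((CU - CP) * (a + (1 - a) * (m + z * (1 - m))) + (1 - m) * gam * L * (1 - a))
    - (1 - m) * gam * CP * (a + (1 - a) * (m + z * (1 - m)))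

lemma Pg_abstract (t gam L CP CU m B A : ℝ) (hβ : B * A ≠ 0) :
    (B * A - gam) * ((CU - CP) * A + (1 - m) * gam * L * t) - (1 - m) * gam * CP * A
    = B * A ^ 2 * ((1 - gam / (B * A)) * (CU - CP)
        - (1 - m) * (1 - (1 - gam / (B * A))) * (-(t * L * B * (1 - gam / (B * A)) - CP))) := by
  have hB : B ≠ 0 := left_ne_zero_of_mul hβ
  have hA : A ≠ 0 := right_ne_zero_of_mul hβ
  field_simp
  ring

lemma Pq_eq_mul (a gam bP bU L CP CU z m : ℝ)
    (hβ : (bP + (bU - bP) * z) * (a + (1 - a) * (1 * m + z * (1 - m))) ≠ 0) :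
    Pq a gam bP bU L CP CU z m
      = (bP + (bU - bP) * z) * (a + (1 - a) * (1 * m + z * (1 - m))) ^ 2 *
          gFun a gam bP bU L CP CU z m := by
  have hA : a + (1 - a) * (m + z * (1 - m)) = a + (1 - a) * (1 * m + z * (1 - m)) := by ring
  have h := Pg_abstract (1 - a) gam L CP CU m (bP + (bU - bP) * z)
    (a + (1 - a) * (1 * m + z * (1 - m))) hβ
  unfold Pq gFun yEE hFun betaEff
  rw [hA]
  exact h

/-- Rewriting of Pq at z = 0 in a compact form. -/
lemma Pq_zero (a gam bP bU L CP CU m : ℝ) :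
    Pq a gam bP bU L CP CU 0 m
      = (bP * (a + (1 - a) * m) - gam) *
          ((CU - CP) * (a + (1 - a) * m) + (1 - m) * gam * L * (1 - a))
        - (1 - m) * gam * CP * (a + (1 - a) * m) := by
  unfold Pq; ring

lemma Pq_expand (a gam bP bU L CP CU z m : ℝ) :
    Pq a gam bP bU L CP CU z m
      = ((bP + (bU - bP) * z) * (a + (1 - a) * (m + z * (1 - m))) - gam) *
          ((CU - CP) * (a + (1 - a) * (m + z * (1 - m))) + (1 - m) * gam * L * (1 - a))
        - (1 - m) * gam * CP * (a + (1 - a) * (m + z * (1 - m))) := rfl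

lemma key_abstract (a gam bP bU CP CU z A A0 B w cc : ℝ)
    (ha0 : 0 < a) (hd : 0 < CU - CP) (hu : 0 < bU - bP) (hg0 : 0 < gam)
    (hz : 0 ≤ z) (hAa : a ≤ A) (hA0a : a ≤ A0) (hdiff : A0 ≤ A)
    (hw : 0 ≤ w) (hb0m : gam < bP * A0) (hBb : B - bP = (bU - bP) * z) :
    A0 * ((B * A - gam) * ((CU - CP) * A + w) - cc * A)
    ≥ A * ((bP * A0 - gam) * ((CU - CP) * A0 + w) - cc * A0)
      + a ^ 3 * (bU - bP) * (CU - CP) * z := by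
  have hApos : 0 < A := lt_of_lt_of_le ha0 hAa
  have hA0pos : 0 < A0 := lt_of_lt_of_le ha0 hA0a
  have hdiff0 : 0 ≤ A - A0 := sub_nonneg.2 hdiff
  have hid : A0 * ((B * A - gam) * ((CU - CP) * A + w) - cc * A)
      - A * ((bP * A0 - gam) * ((CU - CP) * A0 + w) - cc * A0)
      = (A * A0 * (B - bP) + gam * (A - A0)) * ((CU - CP) * A + w)
        + A * (bP * A0 - gam) * (CU - CP) * (A - A0) := by ring
  rw [hBb] at hid
  have hQ : (CU - CP) * a ≤ (CU - CP) * A + w := by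
    nlinarith [mul_le_mul_of_nonneg_left hAa hd.le]
  have hQ0' : 0 ≤ (CU - CP) * A + w := le_trans (mul_nonneg hd.le ha0.le) hQ
  have haa : a * a ≤ A * A0 := mul_le_mul hAa hA0a ha0.le hApos.le
  have f2 : a * a * ((bU - bP) * z) * ((CU - CP) * a)
      ≤ A * A0 * ((bU - bP) * z) * ((CU - CP) * A + w) := by
    apply mul_le_mul (mul_le_mul_of_nonneg_right haa (mul_nonneg hu.le hz)) hQ
      (mul_nonneg hd.le ha0.le)
    exact mul_nonneg (mul_nonneg hApos.le hA0pos.le) (mul_nonneg hu.le hz)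
  have f3 : 0 ≤ gam * (A - A0) * ((CU - CP) * A + w) :=
    mul_nonneg (mul_nonneg hg0.le hdiff0) hQ0'
  have f4 : 0 ≤ A * (bP * A0 - gam) * (CU - CP) * (A - A0) :=
    mul_nonneg (mul_nonneg (mul_nonneg hApos.le (sub_pos.2 hb0m).le) hd.le) hdiff0
  nlinarith [hid, f2, f3, f4]

/-- Key inequality: A₀·P(z,m) − A(z)·P(0,m) ≥ a³(bU−bP)(CU−CP)·z. -/
lemma key_ineq (a gam bP bU L CP CU z m : ℝ)
    (ha0 : 0 < a) (ha1 : a < 1) (hg0 : 0 < gam)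
    (hbP : 0 < bP) (hbPU : bP < bU) (hL : 0 < L) (hCPU : CP < CU)
    (hA1 : gam < a * bP)
    (hz : 0 ≤ z) (hz1 : z ≤ 1) (hm : 0 ≤ m) (hm1 : m ≤ 1) :
    (a + (1 - a) * m) * Pq a gam bP bU L CP CU z m
    ≥ (a + (1 - a) * (m + z * (1 - m))) * Pq a gam bP bU L CP CU 0 m
      + a ^ 3 * (bU - bP) * (CU - CP) * z := by
  have hd : 0 < CU - CP := sub_pos.2 hCPU
  have hu : 0 < bU - bP := sub_pos.2 hbPU
  have ht : 0 < 1 - a := sub_pos.2 ha1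
  rw [Pq_expand, Pq_zero]
  refine key_abstract a gam bP bU CP CU z _ _ _ _ ((1 - m) * gam * CP)
    ha0 hd hu hg0 hz ?_ ?_ ?_ ?_ ?_ ?_
  · nlinarith [mul_nonneg hz (sub_nonneg.2 hm1), mul_nonneg ht.le hm]
  · nlinarith [mul_nonneg ht.le hm]
  · nlinarith [mul_nonneg (mul_nonneg ht.le hz) (sub_nonneg.2 hm1)]
  · exact mul_nonneg (mul_nonneg (mul_nonneg (sub_nonneg.2 hm1) hg0.le) hL.le) ht.le
  · nlinarith [mul_nonneg ht.le hm]
  · ring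

set_option maxHeartbeats 1000000 in
theorem stmt14
    (a gam bP bU L CP CU : ℝ)
    (ha : a ∈ Set.Ioo (0:ℝ) 1) (hgam : gam ∈ Set.Ioo (0:ℝ) 1)
    (hbP : 0 < bP) (hbPU : bP < bU) (hbU1 : bU < 1)
    (hL : 0 < L) (hCP : 0 < CP) (hCPU : CP < CU)
    (hA1 : gam < a * bP)
    (mst : ℝ) (hmst : mst ∈ Set.Ioo (0:ℝ) 1)
    (hg : gFun a gam bP bU L CP CU 0 mst = 0) :
    ∀ ε > (0:ℝ), ∃ δ > (0:ℝ), ∀ m : ℝ,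
      mst - δ < m → m < mst → 0 ≤ m →
      ∀ z ∈ Set.Icc (0:ℝ) 1, gFun a gam bP bU L CP CU z m = 0 →
        0 < z ∧ z < ε := by
  obtain ⟨ha0, ha1⟩ := ha
  obtain ⟨hg0, hg1⟩ := hgam
  obtain ⟨hm0, hm1⟩ := hmst
  have hd : 0 < CU - CP := sub_pos.2 hCPU
  have hu : 0 < bU - bP := sub_pos.2 hbPU
  have ht : 0 < 1 - a := sub_pos.2 ha1
  have hβne : ∀ z m : ℝ, 0 ≤ z → 0 ≤ m → m ≤ 1 →
      (bP + (bU - bP) * z) * (a + (1 - a) * (1 * m + z * (1 - m))) ≠ 0 := by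
    intro z m hz hm hm1'
    have h1 : bP ≤ bP + (bU - bP) * z := by nlinarith [mul_nonneg hu.le hz]
    have h2 : a ≤ a + (1 - a) * (1 * m + z * (1 - m)) := by
      nlinarith [mul_nonneg hz (sub_nonneg.2 hm1'), mul_nonneg ht.le hm]
    have : 0 < (bP + (bU - bP) * z) * (a + (1 - a) * (1 * m + z * (1 - m))) :=
      mul_pos (lt_of_lt_of_le hbP h1) (lt_of_lt_of_le ha0 h2)
    exact this.ne'
  -- P(0,mst) = 0
  have hP0 : Pq a gam bP bU L CP CU 0 mst = 0 := by
    rw [Pq_eq_mul a gam bP bU L CP CU 0 mst (hβne 0 mst le_rfl hm0.le hm1.le), hg,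
      mul_zero]
  -- quantities at mst
  obtain ⟨A0, hA0def⟩ : ∃ x : ℝ, x = a + (1 - a) * mst := ⟨_, rfl⟩
  obtain ⟨Q0, hQ0def⟩ : ∃ x : ℝ, x = (CU - CP) * A0 + (1 - mst) * gam * L * (1 - a) := ⟨_, rfl⟩
  obtain ⟨c, hcdef⟩ : ∃ x : ℝ, x = (1 - mst) * gam := ⟨_, rfl⟩
  have hA0pos : 0 < A0 := by
    rw [hA0def]; nlinarith [mul_nonneg ht.le hm0.le]
  have hb0 : gam < bP * A0 := by
    rw [hA0def]; nlinarith [mul_nonneg ht.le hm0.le]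
  have hcpos : 0 < c := by rw [hcdef]; exact mul_pos (sub_pos.2 hm1) hg0
  have hQ0pos : 0 < Q0 := by
    rw [hQ0def]
    have h1 : 0 < (CU - CP) * A0 := mul_pos hd hA0pos
    nlinarith [mul_pos (mul_pos (mul_pos (sub_pos.2 hm1) hg0) hL) ht]
  have hE : (bP * A0 - gam) * Q0 - c * CP * A0 = 0 := by
    have h : Pq a gam bP bU L CP CU 0 mst
        = (bP * A0 - gam) * Q0 - c * CP * A0 := by
      rw [Pq_zero, hQ0def, hcdef, hA0def]
    rw [← h]; exact hP0
  have hCPA0 : (1 - a) * L * (bP * A0 - gam) ≤ CP * A0 := by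
    have h1 : (bP * A0 - gam) * (c * L * (1 - a)) ≤ (bP * A0 - gam) * Q0 := by
      apply mul_le_mul_of_nonneg_left _ (sub_pos.2 hb0).le
      rw [hQ0def, hcdef]
      nlinarith [mul_pos hd hA0pos]
    have h3 : c * ((1 - a) * L * (bP * A0 - gam)) ≤ c * (CP * A0) := by nlinarith [hE, h1]
    exact le_of_mul_le_mul_left h3 hcpos
  obtain ⟨DG, hDGdef⟩ : ∃ x : ℝ, x = bP * (1 - a) * Q0
      + (bP * A0 - gam) * (1 - a) * ((CU - CP) - gam * L)
      + gam * CP * A0 - c * CP * (1 - a) := ⟨_, rfl⟩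
  obtain ⟨c2, hc2def⟩ : ∃ x : ℝ, x = (1 - a) * (bP * (1 - a) * ((CU - CP) - gam * L) + gam * CP) := ⟨_, rfl⟩
  have hDGpos : 0 < DG := by
    have hid2 : A0 * DG
        = (1 - a) * gam * Q0 + (1 - a) * (bP * A0 - gam) * ((CU - CP) * A0)
          + gam * A0 * (CP * A0 - (1 - a) * L * (bP * A0 - gam))
          + (1 - a) * ((bP * A0 - gam) * Q0 - c * CP * A0) := by
      rw [hDGdef]; ring
    have h1 : 0 < (1 - a) * gam * Q0 := mul_pos (mul_pos ht hg0) hQ0pos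
    have h2 : 0 < (1 - a) * (bP * A0 - gam) * ((CU - CP) * A0) :=
      mul_pos (mul_pos ht (sub_pos.2 hb0)) (mul_pos hd hA0pos)
    have h3 : 0 ≤ gam * A0 * (CP * A0 - (1 - a) * L * (bP * A0 - gam)) :=
      mul_nonneg (mul_nonneg hg0.le hA0pos.le) (sub_nonneg.2 hCPA0)
    have hpos : 0 < A0 * DG := by rw [hid2, hE]; nlinarith
    nlinarith [hpos, hA0pos]
  -- quadratic expansion of m ↦ P(0,m) around mst
  have hexp : ∀ m : ℝ, Pq a gam bP bU L CP CU 0 m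
      = Pq a gam bP bU L CP CU 0 mst + (m - mst) * (DG + c2 * (m - mst)) := by
    intro m
    rw [Pq_zero, Pq_zero, hDGdef, hc2def, hQ0def, hcdef, hA0def]
    ring
  -- choose δ
  intro ε hε
  obtain ⟨D, hDdef⟩ : ∃ x : ℝ, x = a ^ 3 * (bU - bP) * (CU - CP) := ⟨_, rfl⟩
  have hDpos : 0 < D := by rw [hDdef]; positivity
  obtain ⟨Mb, hMbdef⟩ : ∃ x : ℝ, x = DG + |c2| := ⟨_, rfl⟩
  have hMbpos : 0 < Mb := by
    rw [hMbdef]; linarith [abs_nonneg c2, hDGpos]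
  obtain ⟨δ, hδpos, hδ1, hδ2, hδ3⟩ :
      ∃ δ : ℝ, 0 < δ ∧ δ ≤ 1 ∧ δ * (2 * (|c2| + 1)) ≤ DG ∧ δ * (2 * (Mb + 1)) ≤ D * ε := by
    have hden1 : (0:ℝ) < 2 * (|c2| + 1) := by linarith [abs_nonneg c2]
    have hden2 : (0:ℝ) < 2 * (Mb + 1) := by linarith [hMbpos]
    have h1 : 0 < DG / (2 * (|c2| + 1)) := div_pos hDGpos hden1
    have h2 : 0 < D * ε / (2 * (Mb + 1)) := div_pos (mul_pos hDpos hε) hden2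
    refine ⟨min 1 (min (DG / (2 * (|c2| + 1))) (D * ε / (2 * (Mb + 1)))), ?_, ?_, ?_, ?_⟩
    · exact lt_min one_pos (lt_min h1 h2)
    · exact min_le_left _ _
    · have h : min 1 (min (DG / (2 * (|c2| + 1))) (D * ε / (2 * (Mb + 1))))
          ≤ DG / (2 * (|c2| + 1)) :=
        le_trans (min_le_right _ _) (min_le_left _ _)
      calc min 1 (min (DG / (2 * (|c2| + 1))) (D * ε / (2 * (Mb + 1)))) * (2 * (|c2| + 1))
          ≤ DG / (2 * (|c2| + 1)) * (2 * (|c2| + 1)) :=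
            mul_le_mul_of_nonneg_right h hden1.le
        _ = DG := div_mul_cancel₀ _ hden1.ne'
    · have h : min 1 (min (DG / (2 * (|c2| + 1))) (D * ε / (2 * (Mb + 1))))
          ≤ D * ε / (2 * (Mb + 1)) :=
        le_trans (min_le_right _ _) (min_le_right _ _)
      calc min 1 (min (DG / (2 * (|c2| + 1))) (D * ε / (2 * (Mb + 1)))) * (2 * (Mb + 1))
          ≤ D * ε / (2 * (Mb + 1)) * (2 * (Mb + 1)) :=
            mul_le_mul_of_nonneg_right h hden2.le
        _ = D * ε := div_mul_cancel₀ _ hden2.ne'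
  refine ⟨δ, hδpos, ?_⟩
  intro m hmlo hmhi hm0'
  have hm1' : m ≤ 1 := le_of_lt (lt_trans hmhi hm1)
  have he0 : 0 < mst - m := sub_pos.2 hmhi
  have heδ : mst - m < δ := by linarith
  have hbr_lo : DG / 2 ≤ DG + c2 * (m - mst) := by
    have h1 : c2 * (mst - m) ≤ |c2| * (mst - m) :=
      mul_le_mul_of_nonneg_right (le_abs_self c2) he0.le
    have h2 : |c2| * (mst - m) ≤ |c2| * δ :=
      mul_le_mul_of_nonneg_left heδ.le (abs_nonneg c2)
    have h3 : |c2| * δ ≤ DG / 2 := by linarith [hδ2, hδpos]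
    linarith [h1, h2, h3]
  have hbr_hi : DG + c2 * (m - mst) ≤ Mb := by
    have h1 : c2 * (m - mst) ≤ |c2| * (mst - m) := by
      have := mul_le_mul_of_nonneg_right (neg_le_abs c2) he0.le
      linarith
    have h2 : |c2| * (mst - m) ≤ |c2| * 1 :=
      mul_le_mul_of_nonneg_left (by linarith) (abs_nonneg c2)
    rw [hMbdef]; linarith [h1, h2]
  have hbr_pos : 0 < DG + c2 * (m - mst) := by linarith [hbr_lo, hDGpos]
  have hGm : Pq a gam bP bU L CP CU 0 m = (m - mst) * (DG + c2 * (m - mst)) := by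
    rw [hexp m, hP0]; ring
  have hGmneg : Pq a gam bP bU L CP CU 0 m < 0 := by
    rw [hGm]
    exact mul_neg_of_neg_of_pos (by linarith) hbr_pos
  have hGmlb : -(δ * Mb) ≤ Pq a gam bP bU L CP CU 0 m := by
    rw [hGm]
    have : (mst - m) * (DG + c2 * (m - mst)) ≤ δ * Mb :=
      mul_le_mul heδ.le hbr_hi hbr_pos.le hδpos.le
    linarith [this]
  -- main conclusion
  intro z hz hgz
  obtain ⟨hz0, hz1⟩ := hz
  have hPz : Pq a gam bP bU L CP CU z m = 0 := by
    rw [Pq_eq_mul a gam bP bU L CP CU z m (hβne z m hz0 hm0' hm1'), hgz, mul_zero]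
  have hzne : z ≠ 0 := by
    intro h
    rw [h] at hPz
    exact absurd hPz hGmneg.ne
  have hzpos : 0 < z := lt_of_le_of_ne hz0 (Ne.symm hzne)
  refine ⟨hzpos, ?_⟩
  have hk := key_ineq a gam bP bU L CP CU z m ha0 ha1 hg0 hbP hbPU hL hCPU hA1
    hz0 hz1 hm0' hm1'
  rw [hPz, mul_zero] at hk
  have hAzle1 : a + (1 - a) * (m + z * (1 - m)) ≤ 1 := by
    linarith only [mul_nonneg (mul_nonneg ht.le (sub_nonneg.2 hm1'))
      (sub_nonneg.2 hz1)]
  have hAzpos : 0 < a + (1 - a) * (m + z * (1 - m)) := by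
    have h := mul_nonneg ht.le (add_nonneg hm0' (mul_nonneg hz0 (sub_nonneg.2 hm1')))
    linarith only [h, ha0]
  have h5 : D * z ≤ -((a + (1 - a) * (m + z * (1 - m))) * Pq a gam bP bU L CP CU 0 m) := by
    rw [hDdef]; linarith only [hk]
  have h6 : -((a + (1 - a) * (m + z * (1 - m))) * Pq a gam bP bU L CP CU 0 m)
      ≤ -(Pq a gam bP bU L CP CU 0 m) := by
    have h := mul_nonneg (sub_nonneg.2 hAzle1) (le_of_lt (neg_pos.2 hGmneg))
    linarith only [h]
  have h7 : D * z ≤ δ * Mb := by linarith only [h5, h6, hGmlb]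
  have h8 : δ * Mb < D * ε := by linarith only [hδ3, hδpos, mul_pos hδpos hMbpos]
  have h9 : D * z < D * ε := lt_of_le_of_lt h7 h8
  exact lt_of_mul_lt_mul_left h9 hDpos.le
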